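/- arXiv:1205.2496 — 2 statements merged into one kernel-verified Lean document; each statement's English description precedes it below -/
import Mathlib

section
/- Let G be a finite group, A a Hall π-subgroup of G, and T a subgroup with G = AT. If A permutes with every subgroup of T, then G is an E_{π'}-group, i.e., G has a Hall π'-subgroup. -/
open scoped Pointwise

/-- `n` is a `π`-number: every prime divisor of `n` lies in `π`. -/
def IsPiNumber (π : Set ℕ) (n : ℕ) : Prop := ∀ p : ℕ, p.Prime → p ∣ n → p ∈ π

/-- `n` is a `π'`-number: no prime divisor of `n` lies in `π`. -/
def IsPiPrimeNumber (π : Set ℕ) (n : ℕ) : Prop := ∀ p : ℕ, p.Prime → p ∣ n → p ∉ π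

/-- The complement `π'` of `π` inside the set of all primes. -/
def piPrime (π : Set ℕ) : Set ℕ := {p : ℕ | p.Prime ∧ p ∉ π}

/-- `H` is a Hall `π`-subgroup: its order is a `π`-number and its index is a `π'`-number. -/
def IsHallPiSubgroup (π : Set ℕ) {G : Type*} [Group G] (H : Subgroup G) : Prop :=
  IsPiNumber π (Nat.card H) ∧ IsPiPrimeNumber π H.index

/-- `G` is an `E_π`-group: it has a Hall `π`-subgroup. -/
def IsEPiGroup (π : Set ℕ) (G : Type*) [Group G] : Prop :=
  ∃ H : Subgroup G, IsHallPiSubgroup π H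

/-- `G` is a `C_π`-group: an `E_π`-group in which any two Hall `π`-subgroups are conjugate. -/
def IsCPiGroup (π : Set ℕ) (G : Type*) [Group G] : Prop :=
  IsEPiGroup π G ∧ ∀ H K : Subgroup G, IsHallPiSubgroup π H → IsHallPiSubgroup π K →
    ∃ x : G, K = H.map (MulAut.conj x).toMonoidHom

/-- `G` is a `D_π`-group: an `E_π`-group in which every `π`-subgroup lies in a
Hall `π`-subgroup.  (Together with `C_π`-ness this is the classical definition; for
`D_π` as in the paper, every Hall `π`-subgroup is conjugate to any other since both
contain conjugates of each other.) -/
def IsDPiGroup (π : Set ℕ) (G : Type*) [Group G] : Prop :=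
  IsEPiGroup π G ∧ ∀ U : Subgroup G, IsPiNumber π (Nat.card U) →
    ∃ H : Subgroup G, IsHallPiSubgroup π H ∧ U ≤ H

/-- Subgroups `A` and `B` permute: `AB = BA` as subsets. -/
def Permute {G : Type*} [Group G] (A B : Subgroup G) : Prop :=
  (A : Set G) * (B : Set G) = (B : Set G) * (A : Set G)

/-- `A` is `X`-permutable with `B`: `A B^x = B^x A` for some `x ∈ X`. -/
def XPermutable {G : Type*} [Group G] (X A B : Subgroup G) : Prop :=
  ∃ x ∈ X, Permute A (B.map (MulAut.conj x).toMonoidHom)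

/-- `P` is a Sylow subgroup of the subgroup `T` (both viewed inside the ambient group). -/
def IsSylowOf {G : Type*} [Group G] (P T : Subgroup G) : Prop :=
  ∃ p : ℕ, p.Prime ∧ ∃ Q : Sylow p ↥T, P = (Q : Subgroup ↥T).map T.subtype

/-- A group is `π`-separable if it has a chief series each of whose factors has order
a `π`-number or a `π'`-number. -/
def IsPiSeparable (π : Set ℕ) (G : Type*) [Group G] : Prop :=
  ∃ (t : ℕ) (H : ℕ → Subgroup G), H 0 = ⊥ ∧ H t = ⊤ ∧
    (∀ i, i ≤ t → (H i).Normal) ∧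
    (∀ i, i < t → H i < H (i + 1)) ∧
    (∀ i, i < t → ∀ N : Subgroup G, N.Normal → H i < N → N ≤ H (i + 1) → N = H (i + 1)) ∧
    (∀ i, i < t → IsPiNumber π ((H i).relIndex (H (i + 1))) ∨
      IsPiPrimeNumber π ((H i).relIndex (H (i + 1))))

section Aux

lemma IsPiNumber.of_dvd {π : Set ℕ} {m n : ℕ} (h : IsPiNumber π n) (hd : m ∣ n) :
    IsPiNumber π m := fun p hp hpm => h p hp (hpm.trans hd)

lemma IsPiPrimeNumber.of_dvd {π : Set ℕ} {m n : ℕ} (h : IsPiPrimeNumber π n) (hd : m ∣ n) :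
    IsPiPrimeNumber π m := fun p hp hpm => h p hp (hpm.trans hd)

lemma eq_one_of_pi_of_piPrime {π : Set ℕ} {n : ℕ} (hn : n ≠ 0)
    (h1 : IsPiNumber π n) (h2 : IsPiPrimeNumber π n) : n = 1 := by
  by_contra h
  obtain ⟨p, hp, hpd⟩ := Nat.exists_prime_and_dvd h
  exact h2 p hp hpd (h1 p hp hpd)

lemma coprime_of_pi_of_piPrime {π : Set ℕ} {m n : ℕ}
    (h1 : IsPiNumber π m) (h2 : IsPiPrimeNumber π n) : Nat.Coprime m n := by
  by_contra h
  obtain ⟨p, hp, hm, hn⟩ := Nat.Prime.not_coprime_iff_dvd.mp h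
  exact h2 p hp hn (h1 p hp hm)

variable {G : Type*} [Group G]

/-- The product set of two permuting subgroups is a subgroup. -/
def Permute.subgroup {A B : Subgroup G} (h : Permute A B) : Subgroup G where
  carrier := (A : Set G) * (B : Set G)
  one_mem' := ⟨1, A.one_mem, 1, B.one_mem, one_mul 1⟩
  mul_mem' := by
    rintro x y ⟨a1, ha1, b1, hb1, rfl⟩ ⟨a2, ha2, b2, hb2, rfl⟩
    have hmem : b1 * a2 ∈ (A : Set G) * (B : Set G) := by
      rw [h]; exact ⟨b1, hb1, a2, ha2, rfl⟩
    obtain ⟨a3, ha3, b3, hb3, hab⟩ := hmem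
    refine ⟨a1 * a3, mul_mem ha1 ha3, b3 * b2, mul_mem hb3 hb2, ?_⟩
    calc a1 * a3 * (b3 * b2) = a1 * (a3 * b3) * b2 := by group
      _ = a1 * (b1 * a2) * b2 := by rw [show a3 * b3 = b1 * a2 from hab]
      _ = a1 * b1 * (a2 * b2) := by group
  inv_mem' := by
    rintro x ⟨a, ha, b, hb, rfl⟩
    have hmem : b⁻¹ * a⁻¹ ∈ (A : Set G) * (B : Set G) := by
      rw [h]; exact ⟨b⁻¹, inv_mem hb, a⁻¹, inv_mem ha, rfl⟩
    simpa [mul_inv_rev] using hmem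

lemma Permute.coe_subgroup {A B : Subgroup G} (h : Permute A B) :
    (h.subgroup : Set G) = (A : Set G) * (B : Set G) := rfl

lemma Permute.left_le {A B : Subgroup G} (h : Permute A B) : A ≤ h.subgroup :=
  fun x hx => ⟨x, hx, 1, B.one_mem, mul_one x⟩

lemma Permute.right_le {A B : Subgroup G} (h : Permute A B) : B ≤ h.subgroup :=
  fun x hx => ⟨1, A.one_mem, x, hx, one_mul x⟩

/-- The image of `H` in `G ⧸ K` is in bijection with `H ⧸ (K.subgroupOf H)`. -/
noncomputable def quotImageEquiv (H K : Subgroup G) :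
    (H ⧸ K.subgroupOf H) ≃ (((↑) : G → G ⧸ K) '' (H : Set G)) := by
  refine Equiv.ofBijective (fun q => Quotient.liftOn' q
    (fun h => (⟨((h : G) : G ⧸ K), ⟨(h : G), h.2, rfl⟩⟩ :
      (((↑) : G → G ⧸ K) '' (H : Set G))))
    (fun h1 h2 hr => Subtype.ext ?_)) ⟨?_, ?_⟩
  · rw [QuotientGroup.leftRel_apply] at hr
    exact (QuotientGroup.eq (s := K)).mpr hr
  · intro q1 q2
    refine Quotient.inductionOn₂' q1 q2 (fun h1 h2 hval => ?_)
    have : ((h1 : G) : G ⧸ K) = ((h2 : G) : G ⧸ K) := congrArg Subtype.val hval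
    refine Quotient.sound' ?_
    rw [QuotientGroup.leftRel_apply]
    exact (QuotientGroup.eq (s := K)).mp this
  · rintro ⟨q, g, hg, rfl⟩
    exact ⟨QuotientGroup.mk (⟨g, hg⟩ : H), rfl⟩

lemma card_image_quotient_mk (H K : Subgroup G) :
    Nat.card (((↑) : G → G ⧸ K) '' (H : Set G)) = (K.subgroupOf H).index :=
  (Nat.card_congr (quotImageEquiv H K)).symm

lemma card_subgroupOf_eq (H K : Subgroup G) :
    Nat.card (K.subgroupOf H) = Nat.card (H ⊓ K : Subgroup G) := by
  rw [← Subgroup.inf_subgroupOf_right K H]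
  rw [Nat.card_congr (Subgroup.subgroupOfEquivOfLe
    (inf_le_right : K ⊓ H ≤ H)).toEquiv]
  rw [inf_comm]

/-- Product formula: `|HK| * |H ⊓ K| = |H| * |K|`. -/
lemma card_coe_mul_mul_card_inf (H K : Subgroup G) :
    Nat.card ((H : Set G) * (K : Set G)) * Nat.card (H ⊓ K : Subgroup G) =
      Nat.card H * Nat.card K := by
  rw [Subgroup.card_mul_eq_card_subgroup_mul_card_quotient K (H : Set G)]
  rw [show ((H : Set G).image ((↑) : G → G ⧸ K)) = (((↑) : G → G ⧸ K) '' (H : Set G)) from rfl]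
  rw [card_image_quotient_mk, ← card_subgroupOf_eq, mul_assoc,
    mul_comm ((K.subgroupOf H).index), Subgroup.card_mul_index, mul_comm]

end Aux

theorem stmt_7 {G : Type*} [Group G] [Finite G] (π : Set ℕ)
    (hπprime : ∀ p ∈ π, Nat.Prime p) (hπne : π.Nonempty)
    (A : Subgroup G) (hA : IsHallPiSubgroup π A)
    (T : Subgroup G) (hAT : (A : Set G) * (T : Set G) = Set.univ)
    (hperm : ∀ B : Subgroup G, B ≤ T → Permute A B) :
    IsEPiGroup (piPrime π) G := by
  classical
  -- the candidate Hall π-subgroup of T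
  set C : Subgroup G := A ⊓ T with hC
  have hCA : C ≤ A := inf_le_left
  have hCT : C ≤ T := inf_le_right
  -- cardinality bookkeeping
  have huniv : Nat.card ((A : Set G) * (T : Set G)) = Nat.card G := by
    rw [hAT]; exact Nat.card_congr (Equiv.Set.univ G)
  have hGC : Nat.card G * Nat.card C = Nat.card A * Nat.card T := by
    have h := card_coe_mul_mul_card_inf A T
    rw [huniv] at h
    exact h
  have hGA : Nat.card A * A.index = Nat.card G := Subgroup.card_mul_index A
  have hTC : Nat.card C * A.relIndex T = Nat.card T := by
    have h := Subgroup.card_mul_index (A.subgroupOf T)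
    rw [card_subgroupOf_eq T A, inf_comm] at h
    exact h
  have hrel : A.relIndex T = A.index := by
    have h := hGC
    rw [← hGA, ← hTC] at h
    rw [mul_assoc] at h
    have h2 := Nat.eq_of_mul_eq_mul_left (Nat.card_pos (α := A)) h
    rw [mul_comm A.index] at h2
    exact (Nat.eq_of_mul_eq_mul_left (Nat.card_pos (α := C)) h2).symm
  -- π-arithmetic facts
  have hCpi : IsPiNumber π (Nat.card C) := hA.1.of_dvd (Subgroup.card_dvd_of_le hCA)
  have hCrelT : C.relIndex T = A.index := by
    rw [hC, Subgroup.inf_relIndex_right, hrel]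
  -- C permutes with every subgroup of T (Dedekind)
  have hpermC : ∀ B : Subgroup G, B ≤ T → Permute C B := by
    intro B hB
    have h1 : (C : Set G) * (B : Set G) = ((A : Set G) * (B : Set G)) ∩ T := by
      ext x
      constructor
      · rintro ⟨c, hc, b, hb, rfl⟩
        have hc' : c ∈ A ⊓ T := hc
        exact ⟨⟨c, hc'.1, b, hb, rfl⟩, mul_mem hc'.2 (hB hb)⟩
      · rintro ⟨⟨a, ha, b, hb, rfl⟩, hx⟩
        have haT : a ∈ T := by
          have : a = a * b * b⁻¹ := by group
          rw [this]; exact mul_mem hx (inv_mem (hB hb))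
        exact ⟨a, (Subgroup.mem_inf.mpr ⟨ha, haT⟩ : a ∈ A ⊓ T), b, hb, rfl⟩
    have h2 : (B : Set G) * (C : Set G) = ((B : Set G) * (A : Set G)) ∩ T := by
      ext x
      constructor
      · rintro ⟨b, hb, c, hc, rfl⟩
        have hc' : c ∈ A ⊓ T := hc
        exact ⟨⟨b, hb, c, hc'.1, rfl⟩, mul_mem (hB hb) hc'.2⟩
      · rintro ⟨⟨b, hb, a, ha, rfl⟩, hx⟩
        have haT : a ∈ T := by
          have : a = b⁻¹ * (b * a) := by group
          rw [this]; exact mul_mem (inv_mem (hB hb)) hx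
        exact ⟨b, hb, a, (Subgroup.mem_inf.mpr ⟨ha, haT⟩ : a ∈ A ⊓ T), rfl⟩
    show (C : Set G) * (B : Set G) = (B : Set G) * (C : Set G)
    rw [h1, h2, hperm B hB]
  -- C is normalized by T
  have hnorm : ∀ t ∈ T, ∀ c ∈ C, t * c * t⁻¹ ∈ C := by
    intro t ht c hc
    set D : Subgroup G := C.map (MulAut.conj t).toMonoidHom with hD
    have hDT : D ≤ T := by
      intro x hx
      obtain ⟨c', hc', rfl⟩ := Subgroup.mem_map.mp hx
      have hc'T : c' ∈ T := (Subgroup.mem_inf.mp hc').2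
      simpa using mul_mem (mul_mem ht hc'T) (inv_mem ht)
    have hcardD : Nat.card D = Nat.card C :=
      (Nat.card_congr (Subgroup.equivMapOfInjective C (MulAut.conj t).toMonoidHom
        (MulAut.conj t).injective).toEquiv).symm
    have hPCD : Permute C D := hpermC D hDT
    set S : Subgroup G := hPCD.subgroup with hS
    have hCS : C ≤ S := hPCD.left_le
    have hDS : D ≤ S := hPCD.right_le
    have hST : S ≤ T := by
      rintro x ⟨c', hc', d, hd, rfl⟩
      exact mul_mem (hCT hc') (hDT hd)
    have hcardS : Nat.card S * Nat.card (C ⊓ D : Subgroup G) = Nat.card C * Nat.card D :=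
      card_coe_mul_mul_card_inf C D
    have hSpi : IsPiNumber π (Nat.card S) := by
      intro p hp hpd
      have hdvd : p ∣ Nat.card C * Nat.card D :=
        hpd.trans ⟨Nat.card (C ⊓ D : Subgroup G), hcardS.symm⟩
      rcases hp.dvd_mul.mp hdvd with h | h
      · exact hCpi p hp h
      · exact hCpi p hp (hcardD ▸ h)
    have hsubCS : Nat.card (C.subgroupOf S) = Nat.card C := by
      rw [card_subgroupOf_eq S C, inf_comm, inf_of_le_left hCS]
    have hm1 : Nat.card C * C.relIndex S = Nat.card S := by
      have h := Subgroup.card_mul_index (C.subgroupOf S)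
      rw [hsubCS] at h
      exact h
    have hmdvd : C.relIndex S ∣ C.relIndex T :=
      ⟨S.relIndex T, (Subgroup.relIndex_mul_relIndex C S T hCS hST).symm⟩
    have hmpi' : IsPiPrimeNumber π (C.relIndex S) := by
      have h : IsPiPrimeNumber π (C.relIndex T) := by
        rw [hCrelT]; exact hA.2
      exact h.of_dvd hmdvd
    have hmpi : IsPiNumber π (C.relIndex S) :=
      hSpi.of_dvd ⟨Nat.card C, by rw [mul_comm]; exact hm1.symm⟩
    have hmne : C.relIndex S ≠ 0 := by
      intro h0
      have := hm1
      rw [h0, mul_zero] at this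
      exact (Nat.card_pos (α := S)).ne' this.symm
    have hmone : C.relIndex S = 1 := eq_one_of_pi_of_piPrime hmne hmpi hmpi'
    have hScard : Nat.card (C.subgroupOf S) = Nat.card S := by
      rw [hsubCS, ← hm1, hmone, mul_one]
    have hSC : S ≤ C := Subgroup.subgroupOf_eq_top.mp
      (Subgroup.eq_top_of_card_eq _ hScard)
    have htct : t * c * t⁻¹ ∈ D := Subgroup.mem_map.mpr ⟨c, hc, by simp⟩
    exact hSC (hDS htct)
  -- Schur–Zassenhaus inside T
  have hNnormal : (C.subgroupOf T).Normal := by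
    constructor
    intro n hn g
    rw [Subgroup.mem_subgroupOf] at hn ⊢
    have := hnorm (g : G) g.2 (n : G) hn
    simpa using this
  have hcardN : Nat.card (C.subgroupOf T) = Nat.card C := by
    rw [card_subgroupOf_eq T C, inf_comm, inf_of_le_left hCT]
  have hindexN : (C.subgroupOf T).index = A.index := hCrelT
  have hcop : Nat.Coprime (Nat.card (C.subgroupOf T)) (C.subgroupOf T).index := by
    rw [hcardN, hindexN]
    exact coprime_of_pi_of_piPrime hCpi hA.2
  obtain ⟨V', hV'⟩ := Subgroup.exists_right_complement'_of_coprime hcop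
  have hcardV' : Nat.card V' = A.index := by
    have h1 : Nat.card (C.subgroupOf T) * Nat.card V' = Nat.card T := hV'.card_mul_card
    have h2 : Nat.card (C.subgroupOf T) * (C.subgroupOf T).index = Nat.card T :=
      Subgroup.card_mul_index _
    rw [← h2, hindexN] at h1
    exact Nat.eq_of_mul_eq_mul_left (by rw [hcardN]; exact Nat.card_pos (α := C)) h1
  refine ⟨V'.map T.subtype, ?_, ?_⟩
  · intro p hp hpd
    have hcardV : Nat.card (V'.map T.subtype) = Nat.card V' :=
      (Nat.card_congr (Subgroup.equivMapOfInjective V' T.subtype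
        T.subtype_injective).toEquiv).symm
    rw [hcardV, hcardV'] at hpd
    exact ⟨hp, hA.2 p hp hpd⟩
  · intro p hp hpd hpmem
    have hcardV : Nat.card (V'.map T.subtype) = Nat.card V' :=
      (Nat.card_congr (Subgroup.equivMapOfInjective V' T.subtype
        T.subtype_injective).toEquiv).symm
    have hVindex : (V'.map T.subtype).index = Nat.card A := by
      have h1 : Nat.card (V'.map T.subtype) * (V'.map T.subtype).index = Nat.card G :=
        Subgroup.card_mul_index _
      rw [hcardV, hcardV'] at h1
      have h2 : Nat.card A * A.index = Nat.card G := Subgroup.card_mul_index A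
      have h3 : A.index * (V'.map T.subtype).index = A.index * Nat.card A := by
        rw [h1, ← h2, mul_comm]
      exact Nat.eq_of_mul_eq_mul_left
        (Nat.pos_of_ne_zero (Subgroup.index_ne_zero_of_finite)) h3
    rw [hVindex] at hpd
    exact hpmem.2 (hA.1 p hp hpd)
end

section
/- Let A and B be subgroups of a finite group G such that G ≠ AB and AB^x = B^x A for all x ∈ G. Then G has a proper normal subgroup N such that either A ≤ N or B ≤ N. -/
open scoped Pointwise

namespace Kegel17

variable {G : Type*} [Group G]

/-- Conjugation of a subgroup: `cmap x H = x H x⁻¹`. -/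
def cmap (x : G) (H : Subgroup G) : Subgroup G := H.map (MulAut.conj x).toMonoidHom

lemma mem_cmap {x : G} {H : Subgroup G} {g : G} : g ∈ cmap x H ↔ x⁻¹ * g * x ∈ H := by
  constructor
  · rintro ⟨b, hb, rfl⟩
    simpa [MulAut.conj_apply, mul_assoc] using hb
  · intro h
    exact ⟨x⁻¹ * g * x, h, by simp [MulAut.conj_apply]; group⟩

lemma cmap_cmap (y x : G) (H : Subgroup G) : cmap y (cmap x H) = cmap (y * x) H := by
  ext g
  simp only [mem_cmap]
  have h : x⁻¹ * (y⁻¹ * g * y) * x = (y * x)⁻¹ * g * (y * x) := by group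
  rw [h]

lemma cmap_one (H : Subgroup G) : cmap 1 H = H := by
  ext g; simp [mem_cmap]

lemma cmap_self {d : G} {H : Subgroup G} (hd : d ∈ H) : cmap d H = H := by
  ext g
  rw [mem_cmap]
  constructor
  · intro h
    have := H.mul_mem (H.mul_mem hd h) (H.inv_mem hd)
    simpa [mul_assoc] using this
  · intro h
    exact H.mul_mem (H.mul_mem (H.inv_mem hd) h) hd

lemma cmap_inv_cmap (x : G) (H : Subgroup G) : cmap x⁻¹ (cmap x H) = H := by
  rw [cmap_cmap, inv_mul_cancel, cmap_one]

lemma cmap_cmap_inv (x : G) (H : Subgroup G) : cmap x (cmap x⁻¹ H) = H := by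
  rw [cmap_cmap, mul_inv_cancel, cmap_one]

lemma card_cmap (x : G) (H : Subgroup G) : Nat.card (cmap x H) = Nat.card H := by
  have h : Function.Injective ⇑(MulAut.conj x).toMonoidHom := by
    rw [MulEquiv.coe_toMonoidHom]; exact (MulAut.conj x).injective
  exact (Nat.card_congr (H.equivMapOfInjective _ h).toEquiv).symm

lemma card_lt_of_lt [Finite G] {H K : Subgroup G} (h : H < K) : Nat.card H < Nat.card K := by
  have h1 : (H : Set G) ⊂ (K : Set G) := SetLike.coe_ssubset_coe.mpr h
  have := Set.ncard_lt_ncard h1 (Set.toFinite _)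
  rw [← Nat.card_coe_set_eq, ← Nat.card_coe_set_eq] at this
  exact this

lemma eq_of_le_of_card_le [Finite G] {H K : Subgroup G} (h : H ≤ K)
    (hc : Nat.card K ≤ Nat.card H) : H = K := by
  by_contra hne
  exact absurd hc (not_le.mpr (card_lt_of_lt (h.lt_of_ne hne)))

lemma cmap_lt_cmap {H K : Subgroup G} (z : G) (h : H < K) : cmap z H < cmap z K := by
  refine lt_of_le_of_ne (Subgroup.map_mono h.le) fun he => h.ne ?_
  have := congrArg (cmap z⁻¹) he
  rwa [cmap_inv_cmap, cmap_inv_cmap] at this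

/-- Claim 1 (transmutation): if `A * D = G` then `A * (w D w⁻¹) = G` for every `w`. -/
lemma claim1 {A D : Subgroup G} (hAD : (A : Set G) * (D : Set G) = Set.univ) (w : G) :
    (A : Set G) * ((cmap w D : Subgroup G) : Set G) = Set.univ := by
  have hw : w ∈ (A : Set G) * (D : Set G) := by rw [hAD]; trivial
  obtain ⟨a, ha, d, hd, hw⟩ := hw
  have h1 : cmap w D = cmap a D := by
    rw [← hw, ← cmap_cmap, cmap_self hd]
  rw [h1]
  apply Set.eq_univ_of_forall
  intro g
  have hg : a⁻¹ * g * a ∈ (A : Set G) * (D : Set G) := by rw [hAD]; trivial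
  obtain ⟨α₀, hα₀, d₀, hd₀, hg⟩ := hg
  dsimp only at hg
  refine ⟨a * α₀ * a⁻¹, A.mul_mem (A.mul_mem ha hα₀) (A.inv_mem ha), a * d₀ * a⁻¹,
    mem_cmap.mpr (by simpa [mul_assoc] using hd₀), ?_⟩
  have : a * (α₀ * d₀) * a⁻¹ = g := by
    rw [hg]; group
  calc a * α₀ * a⁻¹ * (a * d₀ * a⁻¹) = a * (α₀ * d₀) * a⁻¹ := by group
  _ = g := this

/-- `T` is generated by conjugates of `B`. -/
def CG (B T : Subgroup G) : Prop :=
  ∃ X : Set G, T = Subgroup.closure (⋃ x ∈ X, ((cmap x B : Subgroup G) : Set G))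

lemma CG_self (B : Subgroup G) : CG B B := by
  refine ⟨{1}, ?_⟩
  simp [cmap_one]

lemma CG_cmap {B T : Subgroup G} (z : G) (h : CG B T) : CG B (cmap z T) := by
  obtain ⟨X, rfl⟩ := h
  refine ⟨(fun x => z * x) '' X, ?_⟩
  show Subgroup.map _ _ = _
  rw [MonoidHom.map_closure]
  congr 1
  rw [Set.image_iUnion₂, Set.biUnion_image]
  refine Set.iUnion₂_congr fun x hx => ?_
  have : (⇑(MulAut.conj z).toMonoidHom '' ((cmap x B : Subgroup G) : Set G)) =
      ((cmap z (cmap x B) : Subgroup G) : Set G) := (Subgroup.coe_map _ _).symm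
  rw [this, cmap_cmap]

lemma CG_pair (B : Subgroup G) (x y : G) : CG B (cmap x B ⊔ cmap y B) := by
  refine ⟨{x, y}, ?_⟩
  have : (⋃ z ∈ ({x, y} : Set G), ((cmap z B : Subgroup G) : Set G)) =
      ((cmap x B : Subgroup G) : Set G) ∪ ((cmap y B : Subgroup G) : Set G) := by
    simp
  rw [this, Subgroup.closure_union, Subgroup.closure_eq, Subgroup.closure_eq]

/-- Pushing lemma: `A` permutes with any subgroup generated by conjugates of `B`. -/
lemma push {A B T : Subgroup G}
    (hperm : ∀ x : G, (A : Set G) * ((cmap x B : Subgroup G) : Set G) =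
      ((cmap x B : Subgroup G) : Set G) * (A : Set G))
    (hT : CG B T) : (A : Set G) * (T : Set G) = (T : Set G) * (A : Set G) := by
  obtain ⟨X, hTX⟩ := hT
  have key : ∀ t ∈ T, (∀ a ∈ A, ∃ a' ∈ A, ∃ t' ∈ T, t * a = a' * t') ∧
      (∀ a ∈ A, ∃ a' ∈ A, ∃ t' ∈ T, a * t = t' * a') := by
    intro t ht
    rw [hTX] at ht
    induction ht using Subgroup.closure_induction with
    | mem s hs =>
      rw [Set.mem_iUnion₂] at hs
      obtain ⟨x, hx, hs⟩ := hs
      have hle : cmap x B ≤ T := by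
        rw [hTX]
        intro g hg
        exact Subgroup.subset_closure (Set.mem_iUnion₂.mpr ⟨x, hx, hg⟩)
      constructor
      · intro a ha
        have hm : s * a ∈ ((cmap x B : Subgroup G) : Set G) * (A : Set G) := ⟨s, hs, a, ha, rfl⟩
        rw [← hperm x] at hm
        obtain ⟨a', ha', b', hb', heq⟩ := hm
        exact ⟨a', ha', b', hle hb', heq.symm⟩
      · intro a ha
        have hm : a * s ∈ (A : Set G) * ((cmap x B : Subgroup G) : Set G) := ⟨a, ha, s, hs, rfl⟩
        rw [hperm x] at hm
        obtain ⟨b', hb', a', ha', heq⟩ := hm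
        exact ⟨a', ha', b', hle hb', heq.symm⟩
    | one =>
      constructor
      · intro a ha; exact ⟨a, ha, 1, T.one_mem, by group⟩
      · intro a ha; exact ⟨a, ha, 1, T.one_mem, by group⟩
    | mul u v hu hv hu' hv' =>
      obtain ⟨h1l, h1r⟩ := hu'
      obtain ⟨h2l, h2r⟩ := hv'
      constructor
      · intro a ha
        obtain ⟨a₂, ha₂, t₂', ht₂', he₂⟩ := h2l a ha
        obtain ⟨a₁, ha₁, t₁', ht₁', he₁⟩ := h1l a₂ ha₂
        exact ⟨a₁, ha₁, t₁' * t₂', T.mul_mem ht₁' ht₂',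
          by rw [mul_assoc, he₂, ← mul_assoc, he₁, mul_assoc]⟩
      · intro a ha
        obtain ⟨a₁, ha₁, t₁', ht₁', he₁⟩ := h1r a ha
        obtain ⟨a₂, ha₂, t₂', ht₂', he₂⟩ := h2r a₁ ha₁
        exact ⟨a₂, ha₂, t₁' * t₂', T.mul_mem ht₁' ht₂',
          by rw [← mul_assoc, he₁, mul_assoc, he₂, ← mul_assoc]⟩
    | inv u hu hu' =>
      obtain ⟨h1l, h1r⟩ := hu'
      constructor
      · intro a ha
        obtain ⟨a', ha', t', ht', he⟩ := h1r a⁻¹ (A.inv_mem ha)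
        refine ⟨a'⁻¹, A.inv_mem ha', t'⁻¹, T.inv_mem ht', ?_⟩
        have := congrArg (fun g => g⁻¹) he
        simpa [mul_inv_rev] using this
      · intro a ha
        obtain ⟨a', ha', t', ht', he⟩ := h1l a⁻¹ (A.inv_mem ha)
        refine ⟨a'⁻¹, A.inv_mem ha', t'⁻¹, T.inv_mem ht', ?_⟩
        have := congrArg (fun g => g⁻¹) he
        simpa [mul_inv_rev] using this
  ext g
  constructor
  · rintro ⟨a, ha, t, ht, rfl⟩
    obtain ⟨a', ha', t', ht', heq⟩ := (key t ht).2 a ha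
    exact ⟨t', ht', a', ha', heq.symm⟩
  · rintro ⟨t, ht, a, ha, rfl⟩
    obtain ⟨a', ha', t', ht', heq⟩ := (key t ht).1 a ha
    exact ⟨a', ha', t', ht', heq.symm⟩

/-- The product `A * (x B x⁻¹)` as a subgroup. -/
def pk (A C : Subgroup G) (h : (A : Set G) * (C : Set G) = (C : Set G) * (A : Set G)) :
    Subgroup G where
  carrier := (A : Set G) * (C : Set G)
  one_mem' := ⟨1, A.one_mem, 1, C.one_mem, one_mul 1⟩
  mul_mem' := by
    rintro p q ⟨a, ha, c, hc, rfl⟩ ⟨a', ha', c', hc', rfl⟩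
    have : c * a' ∈ (C : Set G) * (A : Set G) := ⟨c, hc, a', ha', rfl⟩
    rw [← h] at this
    obtain ⟨a'', ha'', c'', hc'', heq⟩ := this
    dsimp only at heq
    refine ⟨a * a'', A.mul_mem ha ha'', c'' * c', C.mul_mem hc'' hc', ?_⟩
    show a * a'' * (c'' * c') = a * c * (a' * c')
    calc a * a'' * (c'' * c') = a * (a'' * c'') * c' := by group
    _ = a * (c * a') * c' := by rw [heq]
    _ = a * c * (a' * c') := by group
  inv_mem' := by
    rintro p ⟨a, ha, c, hc, rfl⟩
    have : c⁻¹ * a⁻¹ ∈ (C : Set G) * (A : Set G) := ⟨c⁻¹, C.inv_mem hc, a⁻¹, A.inv_mem ha, rfl⟩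
    rw [← h] at this
    obtain ⟨a'', ha'', c'', hc'', heq⟩ := this
    dsimp only at heq
    refine ⟨a'', ha'', c'', hc'', by dsimp only; rw [mul_inv_rev]; exact heq⟩

lemma mem_pk {A C : Subgroup G} {h} {g : G} :
    g ∈ pk A C h ↔ g ∈ (A : Set G) * (C : Set G) := Iff.rfl

lemma conj_mem_normalizer {B' : Subgroup G} {r : G} (g : G) (hr : r ∈ Subgroup.normalizer (B' : Set G)) :
    g * r * g⁻¹ ∈ Subgroup.normalizer (cmap g B' : Set G) := by
  rw [Subgroup.mem_normalizer_iff] at hr ⊢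
  intro h
  rw [mem_cmap, mem_cmap]
  have e : g⁻¹ * (g * r * g⁻¹ * h * (g * r * g⁻¹)⁻¹) * g = r * (g⁻¹ * h * g) * r⁻¹ := by group
  rw [e]
  exact hr (g⁻¹ * h * g)

lemma coe_mul_top [Finite G] (A : Subgroup G) :
    (A : Set G) * ((⊤ : Subgroup G) : Set G) = Set.univ := by
  rw [Subgroup.coe_top, Set.mul_univ ⟨1, A.one_mem⟩]

set_option maxHeartbeats 1000000 in
lemma main_aux [Finite G] (A : Subgroup G) :
    ∀ (n : ℕ) (B : Subgroup G), Nat.card G - Nat.card B ≤ n →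
    (A : Set G) * (B : Set G) ≠ Set.univ →
    (∀ x : G, (A : Set G) * ((cmap x B : Subgroup G) : Set G) =
      ((cmap x B : Subgroup G) : Set G) * (A : Set G)) →
    ∃ N : Subgroup G, N.Normal ∧ N ≠ ⊤ ∧ (A ≤ N ∨ B ≤ N) := by
  intro n
  induction n with
  | zero =>
    intro B hn hne _
    exfalso
    have h1 : Nat.card B ≤ Nat.card G := Nat.card_le_card_of_injective _ B.subtype_injective
    have h2 : Nat.card G ≤ Nat.card B := by omega
    have hB : B = ⊤ := B.eq_top_of_card_eq (le_antisymm h1 h2)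
    rw [hB] at hne
    exact hne (coe_mul_top A)
  | succ n ih =>
    intro B hn hne hperm
    by_contra hcon
    push_neg at hcon
    -- hcon : ∀ N, N.Normal → N ≠ ⊤ → ¬(A ≤ N) ∧ ¬(B ≤ N)
    have hBtop : B ≠ ⊤ := by
      intro h
      rw [h] at hne
      exact hne (coe_mul_top A)
    have hBnormal : ¬ B.Normal := fun h => (hcon B h hBtop).2 le_rfl
    -- Claim 1 consequence: every A * Bˣ is proper
    have hproper : ∀ x : G, (A : Set G) * ((cmap x B : Subgroup G) : Set G) ≠ Set.univ := by
      intro x hx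
      have h1 := claim1 hx x⁻¹
      rw [cmap_inv_cmap] at h1
      exact hne h1
    -- every conjugate-generated subgroup strictly containing B gives A * T = G
    have hfour : ∀ T : Subgroup G, CG B T → B < T →
        (A : Set G) * (T : Set G) = Set.univ := by
      intro T hCG hBT
      by_contra hTne
      have hc1 : Nat.card B < Nat.card T := card_lt_of_lt hBT
      have hc2 : Nat.card T ≤ Nat.card G := Nat.card_le_card_of_injective _ T.subtype_injective
      have hTcard : Nat.card G - Nat.card T ≤ n := by omega
      obtain ⟨N, hN1, hN2, hN3⟩ := ih T hTcard hTne (fun z => push hperm (CG_cmap z hCG))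
      rcases hN3 with h | h
      · exact (hcon N hN1 hN2).1 h
      · exact (hcon N hN1 hN2).2 (le_trans hBT.le h)
    -- endgame: A normalizes every conjugate of B
    have hnormalize : ∀ x : G, A ≤ Subgroup.normalizer (cmap x B : Set G) := by
      intro x
      have hpx := hperm x
      have hclaim : ∀ k ∈ pk A (cmap x B) hpx, cmap k (cmap x B) = cmap x B := by
        by_contra hk
        push_neg at hk
        obtain ⟨k, hkK, hkne⟩ := hk
        have hBxK : ∀ b ∈ cmap x B, b ∈ pk A (cmap x B) hpx := by
          intro b hb
          exact mem_pk.mpr ⟨1, A.one_mem, b, hb, one_mul b⟩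
        have hCG : CG B (cmap x B ⊔ cmap k (cmap x B)) := by
          rw [cmap_cmap]
          exact CG_pair B x (k * x)
        have hlt : cmap x B < cmap x B ⊔ cmap k (cmap x B) := by
          refine lt_of_le_of_ne le_sup_left fun he => hkne ?_
          have hle : cmap k (cmap x B) ≤ cmap x B := le_trans le_sup_right he.ge
          exact eq_of_le_of_card_le hle (le_of_eq (card_cmap k (cmap x B)).symm)
        have hBC : B < cmap x⁻¹ (cmap x B ⊔ cmap k (cmap x B)) := by
          have h7 := cmap_lt_cmap x⁻¹ hlt
          rwa [cmap_inv_cmap] at h7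
        have hACuniv := hfour _ (CG_cmap x⁻¹ hCG) hBC
        have hAT' : (A : Set G) * ((cmap x B ⊔ cmap k (cmap x B) : Subgroup G) : Set G) =
            Set.univ := by
          have h5 := claim1 hACuniv x
          rwa [cmap_cmap_inv] at h5
        have hT'K : cmap x B ⊔ cmap k (cmap x B) ≤ pk A (cmap x B) hpx := by
          refine sup_le ?_ ?_
          · intro b hb; exact hBxK b hb
          · intro t ht
            rw [mem_cmap] at ht
            have he : t = k * (k⁻¹ * t * k) * k⁻¹ := by group
            rw [he]
            exact Subgroup.mul_mem _ (Subgroup.mul_mem _ hkK (hBxK _ ht)) (Subgroup.inv_mem _ hkK)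
        have huniv : ((pk A (cmap x B) hpx : Subgroup G) : Set G) = Set.univ := by
          apply Set.eq_univ_of_univ_subset
          rw [← hAT']
          rintro g ⟨a, ha, t, ht, rfl⟩
          exact Subgroup.mul_mem _ (mem_pk.mpr ⟨a, ha, 1, (cmap x B).one_mem, mul_one a⟩)
            (hT'K ht)
        exact hproper x huniv
      intro a ha
      rw [Subgroup.mem_normalizer_iff]
      intro h
      have hca := hclaim a (mem_pk.mpr ⟨a, ha, 1, (cmap x B).one_mem, mul_one a⟩)
      constructor
      · intro hh
        rw [← hca, mem_cmap]
        have he : a⁻¹ * (a * h * a⁻¹) * a = h := by group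
        rw [he]; exact hh
      · intro hh
        rw [← hca, mem_cmap] at hh
        have he : a⁻¹ * (a * h * a⁻¹) * a = h := by group
        rwa [he] at hh
    -- the intersection of all normalizers of conjugates is proper, normal, contains A
    have hAR : A ≤ ⨅ x : G, Subgroup.normalizer (cmap x B : Set G) := le_iInf fun x => hnormalize x
    have hRN : (⨅ x : G, Subgroup.normalizer (cmap x B : Set G)).Normal := by
      constructor
      intro r hr g
      rw [Subgroup.mem_iInf] at hr ⊢
      intro x
      have hy := hr (g⁻¹ * x)
      have he : cmap x B = cmap g (cmap (g⁻¹ * x) B) := by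
        rw [cmap_cmap]
        congr 1
        group
      rw [he]
      exact conj_mem_normalizer g hy
    have hRtop : (⨅ x : G, Subgroup.normalizer (cmap x B : Set G)) ≠ ⊤ := by
      intro hR
      have h6 : (⊤ : Subgroup G) ≤ Subgroup.normalizer (cmap 1 B : Set G) := by
        rw [← hR]
        exact iInf_le _ 1
      rw [cmap_one] at h6
      exact hBnormal (Subgroup.normalizer_eq_top_iff.mp (top_le_iff.mp h6))
    exact (hcon _ hRN hRtop).1 hAR

end Kegel17


theorem stmt_17 {G : Type*} [Group G] [Finite G] (A B : Subgroup G)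
    (hne : (A : Set G) * (B : Set G) ≠ Set.univ)
    (hperm : ∀ x : G, (A : Set G) * ((B.map (MulAut.conj x).toMonoidHom : Subgroup G) : Set G) =
      ((B.map (MulAut.conj x).toMonoidHom : Subgroup G) : Set G) * (A : Set G)) :
    ∃ N : Subgroup G, N.Normal ∧ N ≠ ⊤ ∧ (A ≤ N ∨ B ≤ N) := by
  exact Kegel17.main_aux A (Nat.card G) B (Nat.sub_le _ _) hne hperm
end
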